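/- Let {(L_i, K_i)}_{i=1}^{M} be a finite family of pairs of subsets of S and let s0 ∈ S. Call a closed communicating class C of P φ-feasible if there exists an index i with C ∩ K_i ≠ ∅ and C ∩ L_i = ∅. Then μ_{s0}{ω : there exists i such that ω visits K_i infinitely often and visits L_i only finitely often} = ∑_{C φ-feasible} μ_{s0}{ω : ω reaches C}, where the sum ranges over the (finitely many) φ-feasible closed communicating classes. (This is the content of Theorem 1 of the paper: the probability of satisfying the Rabin acceptance condition equals the probability of reaching a φ-feasible recurrent set, recurrent classes of a finite Markov chain being its closed communicating classes.) -/

import Mathlib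

open MeasureTheory Finset Set
open scoped Classical ENNReal

/-- `μ` is the path measure of the time-homogeneous Markov chain with transition
matrix `P` started at `s0`: it assigns to each finite cylinder the product of
transition probabilities. -/
def IsPathMeasure {S : Type*} [Fintype S] [DecidableEq S] [MeasurableSpace S]
    (P : S → S → ℝ) (s0 : S) (μ : Measure (ℕ → S)) : Prop :=
  ∀ (n : ℕ) (f : ℕ → S),
    μ {ω | ∀ i ≤ n, ω i = f i} =
      if f 0 = s0 then ENNReal.ofReal (∏ i ∈ Finset.range n, P (f i) (f (i + 1))) else 0

/-- `s'` is accessible from `s`: some matrix power of `P` has positive `(s, s')` entry. -/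
def Accessible {S : Type*} [Fintype S] [DecidableEq S] (P : S → S → ℝ) (s s' : S) : Prop :=
  ∃ n : ℕ, 0 < ((Matrix.of P) ^ n) s s'

/-- `C` is a closed set of the chain: from any state of `C`, the chain stays in `C`. -/
def IsClosedSet {S : Type*} [Fintype S] (P : S → S → ℝ) (C : Set S) : Prop :=
  ∀ s ∈ C, ∑ s' ∈ Finset.univ.filter (· ∈ C), P s s' = 1

/-- A closed communicating class: a nonempty closed set all of whose states
communicate with each other. -/
def IsCCC {S : Type*} [Fintype S] [DecidableEq S] (P : S → S → ℝ) (C : Set S) : Prop :=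
  C.Nonempty ∧ IsClosedSet P C ∧ ∀ s ∈ C, ∀ s' ∈ C, Accessible P s s'


namespace RabinAux

section Mat
variable {S : Type*} [Fintype S] [DecidableEq S] {P : S → S → ℝ}

lemma pow_apply_nonneg (hP0 : ∀ s s', 0 ≤ P s s') :
    ∀ (n : ℕ) (s t : S), 0 ≤ ((Matrix.of P) ^ n) s t := by
  intro n
  induction n with
  | zero =>
    intro s t
    rw [pow_zero, Matrix.one_apply]
    split <;> norm_num
  | succ n ih =>
    intro s t
    rw [pow_succ, Matrix.mul_apply]
    exact Finset.sum_nonneg fun y _ => mul_nonneg (ih s y) (hP0 y t)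

lemma closed_out_zero (hP0 : ∀ s s', 0 ≤ P s s') (hP1 : ∀ s, ∑ s', P s s' = 1)
    {C : Set S} (hC : IsClosedSet P C) {s t : S} (hs : s ∈ C) (ht : t ∉ C) : P s t = 0 := by
  have h1 : ∑ s' ∈ Finset.univ.filter (· ∈ C), P s s' = 1 := hC s hs
  have hsplit := Finset.sum_filter_add_sum_filter_not Finset.univ (· ∈ C) (P s)
  rw [h1, hP1 s] at hsplit
  have h2 : ∑ s' ∈ Finset.univ.filter (fun x => ¬ (x ∈ C)), P s s' = 0 := by linarith
  exact (Finset.sum_eq_zero_iff_of_nonneg (fun i _ => hP0 s i)).1 h2 t (by simp [ht])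

lemma isClosedSet_of (hP1 : ∀ s, ∑ s', P s s' = 1) {C : Set S}
    (h : ∀ s ∈ C, ∀ t, t ∉ C → P s t = 0) : IsClosedSet P C := by
  intro s hs
  have h2 : ∑ s' ∈ Finset.univ.filter (fun x => ¬ (x ∈ C)), P s s' = 0 :=
    Finset.sum_eq_zero fun t htm => h s hs t (by simpa using (Finset.mem_filter.1 htm).2)
  have hsplit := Finset.sum_filter_add_sum_filter_not Finset.univ (· ∈ C) (P s)
  rw [h2, hP1 s] at hsplit
  linarith

lemma pos_factors {a b : ℝ} (ha : 0 ≤ a) (hb : 0 ≤ b) (h : 0 < a * b) : 0 < a ∧ 0 < b := by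
  rcases mul_pos_iff.1 h with ⟨h1, h2⟩ | ⟨h1, h2⟩
  · exact ⟨h1, h2⟩
  · exact absurd h1 (not_lt.2 ha)

lemma closed_mem_of_pow_pos (hP0 : ∀ s s', 0 ≤ P s s') (hP1 : ∀ s, ∑ s', P s s' = 1)
    {C : Set S} (hC : IsClosedSet P C) :
    ∀ (n : ℕ) {x s : S}, x ∈ C → 0 < ((Matrix.of P) ^ n) x s → s ∈ C := by
  intro n
  induction n with
  | zero =>
    intro x s hx hpos
    rw [pow_zero, Matrix.one_apply] at hpos
    split at hpos
    · subst ‹x = s›; exact hx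
    · exact absurd hpos (lt_irrefl 0)
  | succ n ih =>
    intro x s hx hpos
    rw [pow_succ, Matrix.mul_apply] at hpos
    have : ∃ y : S, 0 < ((Matrix.of P) ^ n) x y * (Matrix.of P) y s := by
      by_contra hcon
      push_neg at hcon
      have : ∑ y : S, ((Matrix.of P) ^ n) x y * (Matrix.of P) y s ≤ 0 :=
        Finset.sum_nonpos fun y _ => hcon y
      exact absurd hpos (not_lt.2 this)
    obtain ⟨y, hy⟩ := this
    obtain ⟨h1, h2⟩ := pos_factors (pow_apply_nonneg hP0 n x y) (hP0 y s) hy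
    have hyC : y ∈ C := ih hx h1
    by_contra hsC
    rw [closed_out_zero hP0 hP1 hC hyC hsC] at h2
    exact absurd h2 (lt_irrefl 0)

lemma ccc_eq (hP0 : ∀ s s', 0 ≤ P s s') (hP1 : ∀ s, ∑ s', P s s' = 1)
    {C C' : Set S} (h : IsCCC P C) (h' : IsCCC P C') (hne : (C ∩ C').Nonempty) : C = C' := by
  obtain ⟨x, hx, hx'⟩ := hne
  apply Set.Subset.antisymm
  · intro s hs
    obtain ⟨n, hn⟩ := h.2.2 x hx s hs
    exact closed_mem_of_pow_pos hP0 hP1 h'.2.1 n hx' hn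
  · intro s hs
    obtain ⟨n, hn⟩ := h'.2.2 x hx' s hs
    exact closed_mem_of_pow_pos hP0 hP1 h.2.1 n hx hn

end Mat

set_option linter.unusedSectionVars false

section Meas
variable {S : Type*} [Fintype S] [DecidableEq S] [MeasurableSpace S] [MeasurableSingletonClass S]
variable {P : S → S → ℝ} {s0 : S} {μ : Measure (ℕ → S)}

/-- The cylinder event of length `n` determined by `f`. -/
def cylEv (n : ℕ) (f : ℕ → S) : Set (ℕ → S) := {ω | ∀ i ≤ n, ω i = f i}

lemma measurableSet_cylEv (n : ℕ) (f : ℕ → S) : MeasurableSet (cylEv n f) := by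
  have h : cylEv n f = ⋂ i ∈ Finset.range (n+1), (fun ω : ℕ → S => ω i) ⁻¹' {f i} := by
    ext ω; simp [cylEv, Nat.lt_succ_iff]
  rw [h]
  exact MeasurableSet.biInter (Finset.range (n+1)).countable_toSet fun i _ =>
    (measurable_pi_apply i) (measurableSet_singleton _)

/-- Extend a word of length `m+1` to an infinite word by repeating the last letter. -/
def emb (m : ℕ) (w : Fin (m+1) → S) : ℕ → S :=
  fun i => w ⟨min i m, Nat.lt_succ_of_le (min_le_right i m)⟩

lemma emb_le {m : ℕ} {w : Fin (m+1) → S} {i : ℕ} (hi : i ≤ m) :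
    emb m w i = w ⟨i, Nat.lt_succ_of_le hi⟩ := by
  simp only [emb]
  congr 1
  exact Fin.ext (by simp [min_eq_left hi])

lemma emb_coe {m : ℕ} {w : Fin (m+1) → S} (j : Fin (m+1)) : emb m w (j : ℕ) = w j := by
  rw [emb_le (Nat.lt_succ_iff.1 j.isLt)]

lemma emb_eq_of_agree {m : ℕ} {w w' : Fin (m+1) → S} {ω : ℕ → S}
    (h : ω ∈ cylEv m (emb m w)) (h' : ω ∈ cylEv m (emb m w')) : w = w' := by
  funext j
  have hj : (j : ℕ) ≤ m := Nat.lt_succ_iff.1 j.isLt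
  have := (h (j : ℕ) hj).symm.trans (h' (j : ℕ) hj)
  rwa [emb_coe, emb_coe] at this

lemma self_mem_cylEv_emb {m : ℕ} (ω : ℕ → S) :
    ω ∈ cylEv m (emb m (fun j => ω (j : ℕ))) := by
  intro i hi
  rw [emb_le hi]

lemma q_emb_iff {m : ℕ} {q : (ℕ → S) → Prop}
    (hq : ∀ ω ω', (∀ i ≤ m, ω i = ω' i) → q ω → q ω') (ω : ℕ → S) :
    q (emb m (fun j => ω (j : ℕ))) ↔ q ω := by
  have hmem := self_mem_cylEv_emb (m := m) ω
  constructor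
  · intro h; exact hq _ ω (fun i hi => (hmem i hi).symm) h
  · intro h; exact hq ω _ (fun i hi => hmem i hi) h

lemma setOf_prefix_eq {m : ℕ} {q : (ℕ → S) → Prop}
    (hq : ∀ ω ω', (∀ i ≤ m, ω i = ω' i) → q ω → q ω') :
    {ω | q ω} = ⋃ w : Fin (m+1) → S,
      (if q (emb m w) then cylEv m (emb m w) else ∅) := by
  ext ω
  simp only [Set.mem_setOf_eq, Set.mem_iUnion]
  constructor
  · intro h
    refine ⟨fun j => ω (j : ℕ), ?_⟩
    rw [if_pos ((q_emb_iff hq ω).2 h)]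
    exact self_mem_cylEv_emb ω
  · rintro ⟨w, hw⟩
    split at hw
    · next hqw => exact hq (emb m w) ω (fun i hi => (hw i hi).symm) hqw
    · exact absurd hw (Set.notMem_empty ω)

lemma measurableSet_of_prefix {m : ℕ} {q : (ℕ → S) → Prop}
    (hq : ∀ ω ω', (∀ i ≤ m, ω i = ω' i) → q ω → q ω') :
    MeasurableSet {ω | q ω} := by
  rw [setOf_prefix_eq hq]
  refine MeasurableSet.iUnion fun w => ?_
  split
  · exact measurableSet_cylEv m (emb m w)
  · exact MeasurableSet.empty

lemma measure_prefix (hμ : IsPathMeasure P s0 μ) {m : ℕ} {q : (ℕ → S) → Prop}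
    (hq : ∀ ω ω', (∀ i ≤ m, ω i = ω' i) → q ω → q ω') :
    μ {ω | q ω} =
      ∑ w : Fin (m+1) → S, if q (emb m w) then μ (cylEv m (emb m w)) else 0 := by
  rw [setOf_prefix_eq hq]
  rw [measure_iUnion ?_ ?_]
  · rw [tsum_fintype]
    congr 1
    funext w
    split <;> simp
  · intro w w' hne
    simp only [Function.onFun]
    split <;> split <;> try simp
    refine Set.disjoint_left.2 fun ω h h' => hne ?_
    exact emb_eq_of_agree h h'
  · intro w
    split
    · exact measurableSet_cylEv m (emb m w)
    · exact MeasurableSet.empty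

/-- Extend a word of length `m+1` by one extra letter `t` at position `m+1`. -/
def emb2 (m : ℕ) (w : Fin (m+1) → S) (t : S) : ℕ → S :=
  fun i => if h : i ≤ m then w ⟨i, Nat.lt_succ_of_le h⟩ else t

lemma emb2_le {m : ℕ} {w : Fin (m+1) → S} {t : S} {i : ℕ} (hi : i ≤ m) :
    emb2 m w t i = emb m w i := by
  rw [emb_le hi, emb2, dif_pos hi]

lemma emb2_last {m : ℕ} {w : Fin (m+1) → S} {t : S} : emb2 m w t (m+1) = t := by
  rw [emb2, dif_neg (by omega)]

/-- Measure of the one-step extended cylinder. -/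
lemma measure_cylEv_emb2 (hμ : IsPathMeasure P s0 μ) (hP0 : ∀ s s', 0 ≤ P s s')
    {m : ℕ} (w : Fin (m+1) → S) (t u : S) (hwm : emb m w m = u) :
    μ (cylEv (m+1) (emb2 m w t)) = μ (cylEv m (emb m w)) * ENNReal.ofReal (P u t) := by
  have h1 : μ (cylEv (m+1) (emb2 m w t)) =
      if emb2 m w t 0 = s0 then
        ENNReal.ofReal (∏ i ∈ Finset.range (m+1), P (emb2 m w t i) (emb2 m w t (i+1))) else 0 :=
    hμ (m+1) (emb2 m w t)
  have h2 : μ (cylEv m (emb m w)) =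
      if emb m w 0 = s0 then
        ENNReal.ofReal (∏ i ∈ Finset.range m, P (emb m w i) (emb m w (i+1))) else 0 :=
    hμ m (emb m w)
  have h0 : emb2 m w t 0 = emb m w 0 := emb2_le (Nat.zero_le m)
  have hprod : ∏ i ∈ Finset.range (m+1), P (emb2 m w t i) (emb2 m w t (i+1)) =
      (∏ i ∈ Finset.range m, P (emb m w i) (emb m w (i+1))) * P u t := by
    rw [Finset.prod_range_succ]
    congr 1
    · apply Finset.prod_congr rfl
      intro i hi
      have hi' : i < m := Finset.mem_range.1 hi
      rw [emb2_le (le_of_lt hi'), emb2_le hi']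
    · rw [emb2_le (le_refl m), emb2_last, hwm]
  rw [h1, h2, h0, hprod]
  split
  · rw [ENNReal.ofReal_mul (Finset.prod_nonneg fun i _ => hP0 _ _)]
  · rw [zero_mul]

/-- The main conditioning lemma: for an event determined by coordinates `≤ m` on which the
`m`-th coordinate equals `u`, the probability of additionally landing in `T` at time `m+1`
factorizes. -/
lemma lemM (hμ : IsPathMeasure P s0 μ) (hP0 : ∀ s s', 0 ≤ P s s')
    {m : ℕ} {q : (ℕ → S) → Prop}
    (hq : ∀ ω ω', (∀ i ≤ m, ω i = ω' i) → q ω → q ω') {u : S} (hu : ∀ ω, q ω → ω m = u)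
    (T : Finset S) :
    μ {ω | q ω ∧ ω (m+1) ∈ T} = μ {ω | q ω} * ENNReal.ofReal (∑ t ∈ T, P u t) := by
  -- decompose the left-hand side event as a disjoint union over (w, t)
  have hset : {ω | q ω ∧ ω (m+1) ∈ T} =
      ⋃ p : (Fin (m+1) → S) × S,
        (if q (emb m p.1) ∧ p.2 ∈ T then cylEv (m+1) (emb2 m p.1 p.2) else ∅) := by
    ext ω
    simp only [Set.mem_setOf_eq, Set.mem_iUnion]
    constructor
    · rintro ⟨hqω, hT⟩
      refine ⟨⟨fun j => ω (j : ℕ), ω (m+1)⟩, ?_⟩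
      rw [if_pos ⟨(q_emb_iff hq ω).2 hqω, hT⟩]
      intro i hi
      by_cases h : i ≤ m
      · rw [emb2_le h]
        exact self_mem_cylEv_emb ω i h
      · have : i = m + 1 := by omega
        subst this
        rw [emb2_last]
    · rintro ⟨⟨w, t⟩, hw⟩
      split at hw
      · next hqt =>
        have hagree : ∀ i ≤ m, ω i = emb m w i := by
          intro i hi
          rw [← emb2_le (w := w) (t := t) hi]
          exact hw i (le_trans hi (Nat.le_succ m))
        refine ⟨hq (emb m w) ω (fun i hi => (hagree i hi).symm) hqt.1, ?_⟩
        have := hw (m+1) (le_refl _)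
        rw [emb2_last] at this
        rw [this]; exact hqt.2
      · exact absurd hw (Set.notMem_empty ω)
  rw [hset]
  rw [measure_iUnion ?_ ?_]
  rotate_left
  · rintro ⟨w, t⟩ ⟨w', t'⟩ hne
    simp only [Function.onFun]
    split <;> split <;> try simp
    refine Set.disjoint_left.2 fun ω h h' => hne ?_
    have hww' : w = w' := by
      apply emb_eq_of_agree (ω := ω)
      · intro i hi
        rw [← emb2_le (w := w) (t := t) hi]
        exact h i (le_trans hi (Nat.le_succ m))
      · intro i hi
        rw [← emb2_le (w := w') (t := t') hi]
        exact h' i (le_trans hi (Nat.le_succ m))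
    have htt' : t = t' := by
      have h1 := h (m+1) (le_refl _)
      have h2 := h' (m+1) (le_refl _)
      rw [emb2_last] at h1 h2
      rw [← h1, ← h2]
    rw [hww', htt']
  · rintro ⟨w, t⟩
    split
    · exact measurableSet_cylEv (m+1) (emb2 m w t)
    · exact MeasurableSet.empty
  rw [tsum_fintype, Fintype.sum_prod_type]
  simp only [apply_ite μ, measure_empty]
  have hterm : ∀ w : Fin (m+1) → S, ∀ t : S,
      (if q (emb m w) ∧ t ∈ T then μ (cylEv (m+1) (emb2 m w t)) else (0 : ℝ≥0∞)) =
      (if q (emb m w) then μ (cylEv m (emb m w)) else 0) *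
        (if t ∈ T then ENNReal.ofReal (P u t) else 0) := by
    intro w t
    by_cases hqw : q (emb m w)
    · by_cases ht : t ∈ T
      · rw [if_pos ⟨hqw, ht⟩, if_pos hqw, if_pos ht]
        exact measure_cylEv_emb2 hμ hP0 w t u (hu (emb m w) hqw)
      · rw [if_neg (by tauto), if_neg ht, mul_zero]
    · rw [if_neg (by tauto), if_neg hqw, zero_mul]
  have hsum : ∀ w : Fin (m+1) → S,
      (∑ t : S, if q (emb m w) ∧ t ∈ T then μ (cylEv (m+1) (emb2 m w t)) else 0)
      = (if q (emb m w) then μ (cylEv m (emb m w)) else 0) *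
          ENNReal.ofReal (∑ t ∈ T, P u t) := by
    intro w
    have hR : ENNReal.ofReal (∑ t ∈ T, P u t) =
        ∑ t : S, (if t ∈ T then ENNReal.ofReal (P u t) else 0) := by
      rw [ENNReal.ofReal_sum_of_nonneg (fun t _ => hP0 u t), Finset.sum_ite_mem,
        Finset.univ_inter]
    rw [hR, Finset.mul_sum]
    exact Finset.sum_congr rfl fun t _ => hterm w t
  calc ∑ w : Fin (m+1) → S,
        ∑ t : S, (if q (emb m w) ∧ t ∈ T then μ (cylEv (m+1) (emb2 m w t)) else 0)
      = ∑ w : Fin (m+1) → S, (if q (emb m w) then μ (cylEv m (emb m w)) else 0) *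
          ENNReal.ofReal (∑ t ∈ T, P u t) := Finset.sum_congr rfl fun w _ => hsum w
    _ = μ {ω | q ω} * ENNReal.ofReal (∑ t ∈ T, P u t) := by
        rw [← Finset.sum_mul, ← measure_prefix hμ hq]


/-! ### The one-step infinite-visitation lemma -/

/-- `Hset u v N k m`: the time `m` is the `k`-th visit to `u` after time `N`, and no visit
to `v` occurred in `[N, m]`. -/
def Hset (u v : S) (N k m : ℕ) : Set (ℕ → S) :=
  {ω | N ≤ m ∧ ω m = u ∧ (∀ n, N ≤ n → n ≤ m → ω n ≠ v) ∧
    ((Finset.Icc N m).filter (fun n => ω n = u)).card = k}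

lemma Hset_prefix (u v : S) (N k m : ℕ) :
    ∀ ω ω' : ℕ → S, (∀ i ≤ m, ω i = ω' i) → ω ∈ Hset u v N k m → ω' ∈ Hset u v N k m := by
  rintro ω ω' hag ⟨h1, h2, h3, h4⟩
  refine ⟨h1, by rw [← hag m le_rfl]; exact h2,
    fun n hn1 hn2 => by rw [← hag n hn2]; exact h3 n hn1 hn2, ?_⟩
  have heq : (Finset.Icc N m).filter (fun n => ω' n = u) =
      (Finset.Icc N m).filter (fun n => ω n = u) :=
    Finset.filter_congr (fun n hn => by rw [hag n (Finset.mem_Icc.1 hn).2])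
  rw [heq]; exact h4

lemma Hset_disj_aux {u v : S} {N k m m' : ℕ} (h : m < m') (ω : ℕ → S)
    (h1 : ω ∈ Hset u v N k m) (h2 : ω ∈ Hset u v N k m') : False := by
  obtain ⟨hN, hu1, hv1, hc1⟩ := h1
  obtain ⟨hN', hu2, hv2, hc2⟩ := h2
  have hsub : insert m' ((Finset.Icc N m).filter (fun n => ω n = u)) ⊆
      (Finset.Icc N m').filter (fun n => ω n = u) := by
    rw [Finset.insert_subset_iff]
    constructor
    · simp only [Finset.mem_filter, Finset.mem_Icc]
      exact ⟨⟨hN', le_rfl⟩, hu2⟩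
    · exact Finset.filter_subset_filter _ (Finset.Icc_subset_Icc_right (le_of_lt h))
  have hnotmem : m' ∉ (Finset.Icc N m).filter (fun n => ω n = u) := by
    simp only [Finset.mem_filter, Finset.mem_Icc]
    rintro ⟨⟨-, hle⟩, -⟩
    omega
  have hcard := Finset.card_le_card hsub
  rw [Finset.card_insert_of_notMem hnotmem, hc1, hc2] at hcard
  omega

lemma Hset_disj (u v : S) (N k : ℕ) {m m' : ℕ} (hne : m ≠ m') :
    Disjoint (Hset u v N k m) (Hset u v N k m') := by
  rcases lt_or_gt_of_ne hne with h | h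
  · exact Set.disjoint_left.2 fun ω h1 h2 => Hset_disj_aux h ω h1 h2
  · exact Set.disjoint_left.2 fun ω h1 h2 => Hset_disj_aux h ω h2 h1

lemma measurableSet_Hset (u v : S) (N k m : ℕ) : MeasurableSet (Hset u v N k m) :=
  measurableSet_of_prefix (m := m) (q := fun ω => ω ∈ Hset u v N k m) (Hset_prefix u v N k m)

lemma measure_Sk (u v : S) (N k : ℕ) :
    μ (⋃ m, Hset u v N k m) = ∑' m, μ (Hset u v N k m) :=
  measure_iUnion (fun _ _ hne => Hset_disj u v N k hne) (fun m => measurableSet_Hset u v N k m)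

lemma Hstep (hμ : IsPathMeasure P s0 μ) (hP0 : ∀ s s', 0 ≤ P s s')
    (hP1 : ∀ s, ∑ s', P s s' = 1) (u v : S) (N k m : ℕ) :
    μ (Hset u v N k m ∩ {ω | ω (m+1) ≠ v}) =
      μ (Hset u v N k m) * ENNReal.ofReal (1 - P u v) := by
  have hs : ∑ t ∈ Finset.univ.erase v, P u t = 1 - P u v := by
    have h := Finset.add_sum_erase Finset.univ (P u) (Finset.mem_univ v)
    rw [hP1 u] at h
    linarith
  have h := lemM hμ hP0 (m := m) (q := fun ω => ω ∈ Hset u v N k m)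
    (Hset_prefix u v N k m) (u := u) (fun ω hω => hω.2.1) (Finset.univ.erase v)
  have hset : {ω : ℕ → S | ω ∈ Hset u v N k m ∧ ω (m+1) ∈ Finset.univ.erase v} =
      Hset u v N k m ∩ {ω | ω (m+1) ≠ v} := by
    ext ω
    simp [Finset.mem_erase, and_comm]
  rw [hset, hs] at h
  exact h

lemma key_incl (u v : S) (N k m' : ℕ) (hk : 1 ≤ k) :
    Hset u v N (k+1) m' ⊆ ⋃ m, (Hset u v N k m ∩ {ω | ω (m+1) ≠ v}) := by
  rintro ω ⟨hN', hu', hv', hc'⟩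
  set F := (Finset.Icc N m').filter (fun n => ω n = u) with hF
  have hm'F : m' ∈ F := by
    simp only [hF, Finset.mem_filter, Finset.mem_Icc]
    exact ⟨⟨hN', le_rfl⟩, hu'⟩
  set G := F.erase m' with hG
  have hGcard : G.card = k := by
    rw [hG, Finset.card_erase_of_mem hm'F, hc']
    omega
  have hGne : G.Nonempty := Finset.card_pos.1 (by omega)
  set m := G.max' hGne with hm
  have hmG : m ∈ G := G.max'_mem hGne
  have hmF : m ∈ F := Finset.mem_of_mem_erase hmG
  have hmm' : m < m' :=
    lt_of_le_of_ne ((Finset.mem_Icc.1 (Finset.mem_filter.1 hmF).1).2)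
      (Finset.ne_of_mem_erase hmG)
  have hNm : N ≤ m := (Finset.mem_Icc.1 (Finset.mem_filter.1 hmF).1).1
  have hum : ω m = u := (Finset.mem_filter.1 hmF).2
  refine Set.mem_iUnion.2 ⟨m, ⟨⟨hNm, hum, ?_, ?_⟩, ?_⟩⟩
  · intro n hn1 hn2
    exact hv' n hn1 (le_trans hn2 (le_of_lt hmm'))
  · have heq : (Finset.Icc N m).filter (fun n => ω n = u) = G := by
      apply Finset.Subset.antisymm
      · intro x hx
        obtain ⟨hxI, hxu⟩ := Finset.mem_filter.1 hx
        obtain ⟨hx1, hx2⟩ := Finset.mem_Icc.1 hxI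
        refine Finset.mem_erase.2 ⟨by omega, ?_⟩
        exact Finset.mem_filter.2 ⟨Finset.mem_Icc.2 ⟨hx1, by omega⟩, hxu⟩
      · intro x hx
        have hxF := Finset.mem_of_mem_erase hx
        obtain ⟨hxI, hxu⟩ := Finset.mem_filter.1 hxF
        obtain ⟨hx1, hx2⟩ := Finset.mem_Icc.1 hxI
        have hxm : x ≤ m := Finset.le_max' G x hx
        exact Finset.mem_filter.2 ⟨Finset.mem_Icc.2 ⟨hx1, hxm⟩, hxu⟩
    rw [heq, hGcard]
  · exact hv' (m+1) (by omega) (by omega)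

lemma Sk_step (hμ : IsPathMeasure P s0 μ) (hP0 : ∀ s s', 0 ≤ P s s')
    (hP1 : ∀ s, ∑ s', P s s' = 1) (u v : S) (N k : ℕ) (hk : 1 ≤ k) :
    μ (⋃ m, Hset u v N (k+1) m) ≤
      ENNReal.ofReal (1 - P u v) * μ (⋃ m, Hset u v N k m) := by
  calc μ (⋃ m', Hset u v N (k+1) m')
      ≤ μ (⋃ m, (Hset u v N k m ∩ {ω | ω (m+1) ≠ v})) :=
        measure_mono (Set.iUnion_subset fun m' => key_incl u v N k m' hk)
    _ ≤ ∑' m, μ (Hset u v N k m ∩ {ω | ω (m+1) ≠ v}) := measure_iUnion_le _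
    _ = ∑' m, μ (Hset u v N k m) * ENNReal.ofReal (1 - P u v) := by
        exact tsum_congr fun m => Hstep hμ hP0 hP1 u v N k m
    _ = ENNReal.ofReal (1 - P u v) * ∑' m, μ (Hset u v N k m) := by
        rw [ENNReal.tsum_mul_right, mul_comm]
    _ = ENNReal.ofReal (1 - P u v) * μ (⋃ m, Hset u v N k m) := by
        rw [← measure_Sk]

lemma Sk_bound (hμ : IsPathMeasure P s0 μ) (hP0 : ∀ s s', 0 ≤ P s s')
    (hP1 : ∀ s, ∑ s', P s s' = 1) [IsProbabilityMeasure μ] (u v : S) (N : ℕ) :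
    ∀ k : ℕ, μ (⋃ m, Hset u v N (k+1) m) ≤ ENNReal.ofReal (1 - P u v) ^ k := by
  intro k
  induction k with
  | zero => simpa using prob_le_one
  | succ k ih =>
    calc μ (⋃ m, Hset u v N (k+2) m)
        ≤ ENNReal.ofReal (1 - P u v) * μ (⋃ m, Hset u v N (k+1) m) :=
          Sk_step hμ hP0 hP1 u v N (k+1) (by omega)
      _ ≤ ENNReal.ofReal (1 - P u v) * ENNReal.ofReal (1 - P u v) ^ k :=
          mul_le_mul_right ih _
      _ = ENNReal.ofReal (1 - P u v) ^ (k+1) := by ring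

lemma target_sub (u v : S) (N k : ℕ) :
    {ω : ℕ → S | {n | ω n = u}.Infinite ∧ ∀ n, N ≤ n → ω n ≠ v} ⊆
      ⋃ m, Hset u v N (k+1) m := by
  rintro ω ⟨hio, hv⟩
  set p : ℕ → Prop := fun n => N ≤ n ∧ ω n = u with hp
  have hpInf : (setOf p).Infinite := by
    have hsub : {n | ω n = u} \ {n | n < N} ⊆ setOf p := by
      rintro n ⟨h1, h2⟩
      exact ⟨by simpa using h2, h1⟩
    exact Set.Infinite.mono hsub (hio.diff (Set.finite_lt_nat N))
  set m := Nat.nth p k with hm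
  have hpm : p m := Nat.nth_mem_of_infinite hpInf k
  have hcount : Nat.count p m = k := Nat.count_nth_of_infinite hpInf k
  have hfil : (Finset.Icc N m).filter (fun n => ω n = u) =
      (Finset.range (m+1)).filter p := by
    ext n
    simp only [Finset.mem_filter, Finset.mem_Icc, Finset.mem_range, hp]
    constructor
    · rintro ⟨⟨h1, h2⟩, h3⟩; exact ⟨by omega, h1, h3⟩
    · rintro ⟨h1, h2, h3⟩; exact ⟨⟨h2, by omega⟩, h3⟩
  have hcard : ((Finset.Icc N m).filter (fun n => ω n = u)).card = k + 1 := by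
    rw [hfil, ← Nat.count_eq_card_filter_range, Nat.count_succ, hcount, if_pos hpm]
  exact Set.mem_iUnion.2 ⟨m, hpm.1, hpm.2, fun n hn1 _ => hv n hn1, hcard⟩

/-- The one-step lemma: if `P u v > 0` then almost surely it is impossible to visit `u`
infinitely often while visiting `v` only finitely often. -/
lemma one_step_io (hμ : IsPathMeasure P s0 μ) (hP0 : ∀ s s', 0 ≤ P s s')
    (hP1 : ∀ s, ∑ s', P s s' = 1) [IsProbabilityMeasure μ] {u v : S} (hp : 0 < P u v) :
    μ {ω : ℕ → S | {n | ω n = u}.Infinite ∧ {n | ω n = v}.Finite} = 0 := by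
  have hple : P u v ≤ 1 := by
    have h1 := hP1 u
    have h2 := Finset.single_le_sum (f := P u) (fun s _ => hP0 u s) (Finset.mem_univ v)
    linarith
  have hc1 : ENNReal.ofReal (1 - P u v) < 1 := by
    rw [ENNReal.ofReal_lt_one]; linarith
  have htend := ENNReal.tendsto_pow_atTop_nhds_zero_of_lt_one hc1
  have hN : ∀ N : ℕ,
      μ {ω : ℕ → S | {n | ω n = u}.Infinite ∧ ∀ n, N ≤ n → ω n ≠ v} = 0 := by
    intro N
    have hbound : ∀ k : ℕ,
        μ {ω : ℕ → S | {n | ω n = u}.Infinite ∧ ∀ n, N ≤ n → ω n ≠ v} ≤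
          ENNReal.ofReal (1 - P u v) ^ k := fun k =>
      le_trans (measure_mono (target_sub u v N k)) (Sk_bound hμ hP0 hP1 u v N k)
    exact le_antisymm (ge_of_tendsto' htend hbound) zero_le
  have hsub : {ω : ℕ → S | {n | ω n = u}.Infinite ∧ {n | ω n = v}.Finite} ⊆
      ⋃ N : ℕ, {ω : ℕ → S | {n | ω n = u}.Infinite ∧ ∀ n, N ≤ n → ω n ≠ v} := by
    rintro ω ⟨h1, h2⟩
    obtain ⟨b, hb⟩ := h2.bddAbove
    refine Set.mem_iUnion.2 ⟨b + 1, h1, fun n hn hv' => ?_⟩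
    have := hb hv'
    omega
  exact measure_mono_null hsub (measure_iUnion_null_iff.2 hN)


/-! ### Corollaries of the conditioning lemma -/

lemma measure_pair (hμ : IsPathMeasure P s0 μ) (hP0 : ∀ s s', 0 ≤ P s s') (n : ℕ) (s t : S) :
    μ {ω : ℕ → S | ω n = s ∧ ω (n+1) = t} =
      μ {ω : ℕ → S | ω n = s} * ENNReal.ofReal (P s t) := by
  have h := lemM hμ hP0 (m := n) (q := fun ω => ω n = s)
    (fun ω ω' hag hω => by show ω' n = s; rw [← hag n le_rfl]; exact hω) (u := s) (fun ω hω => hω)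
    ({t} : Finset S)
  simpa using h

lemma null_leave (hμ : IsPathMeasure P s0 μ) (hP0 : ∀ s s', 0 ≤ P s s')
    (hP1 : ∀ s, ∑ s', P s s' = 1) {C : Set S} (hC : IsClosedSet P C) :
    μ {ω : ℕ → S | ∃ n, ω n ∈ C ∧ ω (n+1) ∉ C} = 0 := by
  have hsub : {ω : ℕ → S | ∃ n, ω n ∈ C ∧ ω (n+1) ∉ C} ⊆
      ⋃ (n : ℕ) (s : S) (t : S),
        {ω : ℕ → S | (s ∈ C ∧ t ∉ C) ∧ ω n = s ∧ ω (n+1) = t} := by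
    rintro ω ⟨n, h1, h2⟩
    exact Set.mem_iUnion.2 ⟨n, Set.mem_iUnion.2 ⟨ω n,
      Set.mem_iUnion.2 ⟨ω (n+1), ⟨h1, h2⟩, rfl, rfl⟩⟩⟩
  refine measure_mono_null hsub ?_
  rw [measure_iUnion_null_iff]; intro n
  rw [measure_iUnion_null_iff]; intro s
  rw [measure_iUnion_null_iff]; intro t
  by_cases hst : s ∈ C ∧ t ∉ C
  · have heq : {ω : ℕ → S | (s ∈ C ∧ t ∉ C) ∧ ω n = s ∧ ω (n+1) = t} =
        {ω : ℕ → S | ω n = s ∧ ω (n+1) = t} := by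
      ext ω; simp [hst.1, hst.2]
    rw [heq, measure_pair hμ hP0 n s t,
      closed_out_zero hP0 hP1 hC hst.1 hst.2, ENNReal.ofReal_zero, mul_zero]
  · have heq : {ω : ℕ → S | (s ∈ C ∧ t ∉ C) ∧ ω n = s ∧ ω (n+1) = t} = ∅ := by
      ext ω
      simp only [Set.mem_setOf_eq, Set.mem_empty_iff_false, iff_false]
      tauto
    rw [heq, measure_empty]

lemma null_badstep (hμ : IsPathMeasure P s0 μ) (hP0 : ∀ s s', 0 ≤ P s s') :
    μ {ω : ℕ → S | ∃ n, P (ω n) (ω (n+1)) = 0} = 0 := by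
  have hsub : {ω : ℕ → S | ∃ n, P (ω n) (ω (n+1)) = 0} ⊆
      ⋃ (n : ℕ) (s : S) (t : S),
        {ω : ℕ → S | P s t = 0 ∧ ω n = s ∧ ω (n+1) = t} := by
    rintro ω ⟨n, hn⟩
    exact Set.mem_iUnion.2 ⟨n, Set.mem_iUnion.2 ⟨ω n,
      Set.mem_iUnion.2 ⟨ω (n+1), hn, rfl, rfl⟩⟩⟩
  refine measure_mono_null hsub ?_
  rw [measure_iUnion_null_iff]; intro n
  rw [measure_iUnion_null_iff]; intro s
  rw [measure_iUnion_null_iff]; intro t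
  by_cases h : P s t = 0
  · have heq : {ω : ℕ → S | P s t = 0 ∧ ω n = s ∧ ω (n+1) = t} =
        {ω : ℕ → S | ω n = s ∧ ω (n+1) = t} := by
      ext ω; simp [h]
    rw [heq, measure_pair hμ hP0 n s t, h, ENNReal.ofReal_zero, mul_zero]
  · have heq : {ω : ℕ → S | P s t = 0 ∧ ω n = s ∧ ω (n+1) = t} = ∅ := by
      ext ω; simp [h]
    rw [heq, measure_empty]

end Meas

section Path
set_option linter.unusedSectionVars false
variable {S : Type*} [Fintype S] [DecidableEq S] {P : S → S → ℝ}

lemma io_of_acc (hP0 : ∀ s s', 0 ≤ P s s') {ω : ℕ → S}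
    (hgood : ∀ u v : S, 0 < P u v → {n | ω n = u}.Infinite → {n | ω n = v}.Infinite) :
    ∀ (k : ℕ) (s t : S), 0 < ((Matrix.of P) ^ k) s t →
      {n | ω n = s}.Infinite → {n | ω n = t}.Infinite := by
  intro k
  induction k with
  | zero =>
    intro s t hpos hio
    rw [pow_zero, Matrix.one_apply] at hpos
    split at hpos
    · exact ‹s = t› ▸ hio
    · exact absurd hpos (lt_irrefl 0)
  | succ k ih =>
    intro s t hpos hio
    rw [pow_succ, Matrix.mul_apply] at hpos
    have hex : ∃ y : S, 0 < ((Matrix.of P) ^ k) s y * (Matrix.of P) y t := by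
      by_contra hcon
      push_neg at hcon
      exact absurd hpos (not_lt.2 (Finset.sum_nonpos fun y _ => hcon y))
    obtain ⟨y, hy⟩ := hex
    obtain ⟨h1, h2⟩ := pos_factors (pow_apply_nonneg hP0 k s y) (hP0 y t) hy
    exact hgood y t h2 (ih s y h1 hio)

lemma acc_of_path (hP0 : ∀ s s', 0 ≤ P s s') {ω : ℕ → S}
    (hpos : ∀ n, 0 < P (ω n) (ω (n+1))) (n : ℕ) :
    ∀ k : ℕ, 0 < ((Matrix.of P) ^ k) (ω n) (ω (n + k)) := by
  intro k
  induction k with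
  | zero =>
    rw [pow_zero]
    simp [Matrix.one_apply]
  | succ k ih =>
    rw [pow_succ, Matrix.mul_apply]
    have hterm : 0 < ((Matrix.of P) ^ k) (ω n) (ω (n + k)) *
        (Matrix.of P) (ω (n + k)) (ω (n + k + 1)) := mul_pos ih (hpos (n + k))
    refine lt_of_lt_of_le hterm ?_
    exact Finset.single_le_sum
      (f := fun j => ((Matrix.of P) ^ k) (ω n) j * (Matrix.of P) j (ω (n + (k + 1))))
      (fun y _ => mul_nonneg (pow_apply_nonneg hP0 k _ _) (hP0 _ _))
      (Finset.mem_univ (ω (n + k)))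

lemma exists_io_state {ω : ℕ → S} {A : Set S} (h : {n | ω n ∈ A}.Infinite) :
    ∃ s ∈ A, {n | ω n = s}.Infinite := by
  by_contra hcon
  push_neg at hcon
  have heq : {n | ω n ∈ A} = ⋃ s ∈ A, {n | ω n = s} := by ext n; simp
  rw [heq] at h
  exact h (Set.Finite.biUnion A.toFinite fun s hs => (hcon s hs))

lemma ioClass_isCCC (hP0 : ∀ s s', 0 ≤ P s s') (hP1 : ∀ s, ∑ s', P s s' = 1) {ω : ℕ → S}
    (hgood : ∀ u v : S, 0 < P u v → {n | ω n = u}.Infinite → {n | ω n = v}.Infinite)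
    (hpos : ∀ n, 0 < P (ω n) (ω (n+1))) [Nonempty S] :
    IsCCC P {s : S | {n | ω n = s}.Infinite} := by
  have hne : ({s : S | {n | ω n = s}.Infinite}).Nonempty := by
    have huniv : ({n | ω n ∈ (Set.univ : Set S)}).Infinite := by
      simpa using (Set.infinite_univ : (Set.univ : Set ℕ).Infinite)
    obtain ⟨s, -, hs⟩ := exists_io_state huniv
    exact ⟨s, hs⟩
  have hclosed : IsClosedSet P {s : S | {n | ω n = s}.Infinite} := by
    refine isClosedSet_of hP1 fun s hs t ht => ?_
    by_contra hne0
    exact ht (hgood s t (lt_of_le_of_ne (hP0 s t) (Ne.symm hne0)) hs)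
  refine ⟨hne, hclosed, fun s hs t ht => ?_⟩
  obtain ⟨n, hn⟩ := hs.nonempty
  obtain ⟨m, hm, hnm⟩ := ht.exists_gt n
  refine ⟨m - n, ?_⟩
  have hk := acc_of_path hP0 hpos n (m - n)
  rw [show n + (m - n) = m from by omega] at hk
  rw [Set.mem_setOf_eq] at hn hm
  rwa [hn, hm] at hk

lemma stay_of_closed {C : Set S} {ω : ℕ → S}
    (hstep : ∀ j, ω j ∈ C → ω (j+1) ∈ C) {n : ℕ} (hn : ω n ∈ C) :
    ∀ m, n ≤ m → ω m ∈ C := by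
  intro m
  induction m with
  | zero =>
    intro hm
    have h0 : n = 0 := by omega
    exact h0 ▸ hn
  | succ m ih =>
    intro hm
    rcases Nat.lt_or_ge n (m+1) with h | h
    · exact hstep m (ih (by omega))
    · have heq : n = m + 1 := by omega
      exact heq ▸ hn

end Path

end RabinAux

/-- Theorem 1: the probability of satisfying the Rabin acceptance condition
equals the probability of reaching a φ-feasible recurrent (closed communicating) class. -/
theorem rabin_sat_prob_eq_sum_reach_phi_feasible
    {S : Type*} [Fintype S] [Nonempty S] [DecidableEq S]
    [MeasurableSpace S] [MeasurableSingletonClass S]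
    (P : S → S → ℝ) (hP0 : ∀ s s', 0 ≤ P s s') (hP1 : ∀ s, ∑ s', P s s' = 1)
    {I : Type*} [Fintype I] (L K : I → Set S) (s0 : S)
    (μ : Measure (ℕ → S)) [IsProbabilityMeasure μ]
    (hμ : IsPathMeasure P s0 μ) :
    μ {ω | ∃ i, {n | ω n ∈ K i}.Infinite ∧ {n | ω n ∈ L i}.Finite} =
      ∑' C : {C : Set S // IsCCC P C ∧ ∃ i, (C ∩ K i).Nonempty ∧ C ∩ L i = ∅},
        μ {ω | ∃ n, ω n ∈ (C : Set S)} := by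
  classical
  -- the three exceptional null sets
  set Z1 : Set (ℕ → S) := ⋃ pr : S × S, {ω : ℕ → S | 0 < P pr.1 pr.2 ∧
    {n | ω n = pr.1}.Infinite ∧ {n | ω n = pr.2}.Finite} with hZ1def
  set Z2 : Set (ℕ → S) := {ω : ℕ → S | ∃ n, P (ω n) (ω (n+1)) = 0} with hZ2def
  set Z3 : Set (ℕ → S) := ⋃ (C : Set S) (_ : IsClosedSet P C),
    {ω : ℕ → S | ∃ n, ω n ∈ C ∧ ω (n+1) ∉ C} with hZ3def
  have hZ1 : μ Z1 = 0 := by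
    rw [hZ1def, measure_iUnion_null_iff]
    rintro ⟨u, v⟩
    by_cases hpv : 0 < P u v
    · refine measure_mono_null (fun ω hω => ?_) (RabinAux.one_step_io hμ hP0 hP1 hpv)
      exact ⟨hω.2.1, hω.2.2⟩
    · refine measure_mono_null (t := ∅) (fun ω hω => absurd hω.1 hpv) (by simp)
  have hZ2 : μ Z2 = 0 := RabinAux.null_badstep hμ hP0
  have hZ3 : μ Z3 = 0 := by
    rw [hZ3def, measure_iUnion_null_iff]
    intro C
    rw [measure_iUnion_null_iff]
    intro hC
    exact RabinAux.null_leave hμ hP0 hP1 hC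
  -- pathwise consequences of avoiding the null sets
  have hgood : ∀ ω : ℕ → S, ω ∉ Z1 →
      ∀ u v : S, 0 < P u v → {n | ω n = u}.Infinite → {n | ω n = v}.Infinite := by
    intro ω h1 u v hpv hio
    by_contra hfin
    exact h1 (Set.mem_iUnion.2 ⟨(u, v), hpv, hio, Set.not_infinite.1 hfin⟩)
  have hposstep : ∀ ω : ℕ → S, ω ∉ Z2 → ∀ n, 0 < P (ω n) (ω (n+1)) := by
    intro ω h2 n
    rcases lt_or_eq_of_le (hP0 (ω n) (ω (n+1))) with h | h
    · exact h
    · exact absurd ⟨n, h.symm⟩ h2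
  have hstay : ∀ ω : ℕ → S, ω ∉ Z3 → ∀ C : Set S, IsClosedSet P C →
      ∀ n, ω n ∈ C → ∀ m, n ≤ m → ω m ∈ C := by
    intro ω h3 C hC n hn
    refine RabinAux.stay_of_closed ?_ hn
    intro j hj
    by_contra hnot
    exact h3 (Set.mem_iUnion.2 ⟨C, Set.mem_iUnion.2 ⟨hC, j, hj, hnot⟩⟩)
  -- the union of reach events over feasible classes
  set U : Set (ℕ → S) :=
    ⋃ C : {C : Set S // IsCCC P C ∧ ∃ i, (C ∩ K i).Nonempty ∧ C ∩ L i = ∅},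
      {ω : ℕ → S | ∃ n, ω n ∈ (C : Set S)} with hUdef
  have hmeasReach : ∀ C : Set S, MeasurableSet {ω : ℕ → S | ∃ n, ω n ∈ C} := by
    intro C
    have heq : {ω : ℕ → S | ∃ n, ω n ∈ C} = ⋃ n, (fun ω : ℕ → S => ω n) ⁻¹' C := by
      ext ω; simp
    rw [heq]
    exact MeasurableSet.iUnion fun n => measurable_pi_apply n (C.toFinite.measurableSet)
  -- inclusion: Rabin minus null sets is contained in U
  have hsub1 : ∀ ω : ℕ → S, ω ∉ Z1 → ω ∉ Z2 →
      (∃ i, {n | ω n ∈ K i}.Infinite ∧ {n | ω n ∈ L i}.Finite) → ω ∈ U := by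
    rintro ω h1 h2 ⟨i, hKi, hLi⟩
    have hCCC := RabinAux.ioClass_isCCC hP0 hP1 (hgood ω h1) (hposstep ω h2)
    obtain ⟨s, hsK, hsio⟩ := RabinAux.exists_io_state hKi
    have hLempty : {s : S | {n | ω n = s}.Infinite} ∩ L i = ∅ := by
      ext t
      simp only [Set.mem_inter_iff, Set.mem_setOf_eq, Set.mem_empty_iff_false, iff_false,
        not_and]
      intro htio htL
      exact (htio.mono fun n hn => by
        rw [Set.mem_setOf_eq] at hn ⊢; rw [hn]; exact htL) hLi
    have hpC : IsCCC P {s : S | {n | ω n = s}.Infinite} ∧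
        ∃ i, ({s : S | {n | ω n = s}.Infinite} ∩ K i).Nonempty ∧
          {s : S | {n | ω n = s}.Infinite} ∩ L i = ∅ :=
      ⟨hCCC, i, ⟨s, hsio, hsK⟩, hLempty⟩
    obtain ⟨n, hn⟩ := hsio.nonempty
    rw [Set.mem_setOf_eq] at hn
    refine Set.mem_iUnion.2 ⟨⟨_, hpC⟩, ⟨n, ?_⟩⟩
    show ω n ∈ {s : S | {n | ω n = s}.Infinite}
    rw [Set.mem_setOf_eq, hn]
    exact hsio
  -- inclusion: U minus null sets is contained in Rabin
  have hsub2 : ∀ ω : ℕ → S, ω ∉ Z1 → ω ∉ Z2 → ω ∉ Z3 → ω ∈ U →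
      ∃ i, {n | ω n ∈ K i}.Infinite ∧ {n | ω n ∈ L i}.Finite := by
    rintro ω h1 h2 h3 hU'
    obtain ⟨⟨C, hpC⟩, hω⟩ := Set.mem_iUnion.1 hU'
    obtain ⟨n0, hn0⟩ := hω
    have hstayC : ∀ m, n0 ≤ m → ω m ∈ C := hstay ω h3 C hpC.1.2.1 n0 hn0
    have hCCC' := RabinAux.ioClass_isCCC hP0 hP1 (hgood ω h1) (hposstep ω h2)
    have hsubC : {s : S | {n | ω n = s}.Infinite} ⊆ C := by
      intro s hs
      obtain ⟨m, hm, hlt⟩ := hs.exists_gt n0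
      rw [Set.mem_setOf_eq] at hm
      exact hm ▸ hstayC m (le_of_lt hlt)
    obtain ⟨sc, hsc⟩ := hCCC'.1
    have hCeq : {s : S | {n | ω n = s}.Infinite} = C :=
      RabinAux.ccc_eq hP0 hP1 hCCC' hpC.1 ⟨sc, hsc, hsubC hsc⟩
    obtain ⟨i, ⟨s, hsC, hsK⟩, hLempty⟩ := hpC.2
    refine ⟨i, ?_, ?_⟩
    · have hsio : {n | ω n = s}.Infinite := by
        rw [← hCeq] at hsC
        exact hsC
      exact hsio.mono fun n hn => by
        rw [Set.mem_setOf_eq] at hn ⊢; rw [hn]; exact hsK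
    · refine Set.Finite.subset (Set.finite_lt_nat n0) ?_
      intro n hn
      rw [Set.mem_setOf_eq] at hn
      simp only [Set.mem_setOf_eq]
      by_contra hge
      push_neg at hge
      have hmemC : ω n ∈ C := hstayC n hge
      have hmem : ω n ∈ C ∩ L i := ⟨hmemC, hn⟩
      rw [hLempty] at hmem
      exact hmem
  -- almost-everywhere equality
  have hae : {ω : ℕ → S | ∃ i, {n | ω n ∈ K i}.Infinite ∧ {n | ω n ∈ L i}.Finite}
      =ᵐ[μ] U := by
    rw [ae_eq_set]
    constructor
    · refine measure_mono_null ?_ (measure_union_null hZ1 hZ2)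
      rintro ω ⟨hR, hU'⟩
      by_contra hmem
      simp only [Set.mem_union, not_or] at hmem
      exact hU' (hsub1 ω hmem.1 hmem.2 hR)
    · refine measure_mono_null ?_
        (measure_union_null (measure_union_null hZ1 hZ2) hZ3)
      rintro ω ⟨hU', hR⟩
      by_contra hmem
      simp only [Set.mem_union, not_or] at hmem
      exact hR (hsub2 ω hmem.1.1 hmem.1.2 hmem.2 hU')
  rw [measure_congr hae, hUdef]
  refine measure_iUnion₀ ?_ ?_
  · rintro ⟨C, hC⟩ ⟨C', hC'⟩ hne
    have hCC' : C ≠ C' := fun h => hne (Subtype.ext h)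
    show μ _ = 0
    refine measure_mono_null ?_ hZ3
    rintro ω ⟨⟨n, hn⟩, ⟨n', hn'⟩⟩
    by_contra h3
    have hs1 := hstay ω h3 C hC.1.2.1 n hn (max n n') (le_max_left n n')
    have hs2 := hstay ω h3 C' hC'.1.2.1 n' hn' (max n n') (le_max_right n n')
    exact hCC' (RabinAux.ccc_eq hP0 hP1 hC.1 hC'.1 ⟨ω (max n n'), hs1, hs2⟩)
  · exact fun C => (hmeasReach C).nullMeasurableSet
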